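/- arXiv:1704.03547 — 2 statements merged into one kernel-verified Lean document; each statement's English description precedes it below -/
import Mathlib

section
/- Let m be a positive integer divisible by 6, and let S, T ⊆ [m] with |S| = |T| = m/2 and |S ∩ T| = m/3. Let A be drawn uniformly at random from all sets X ⊆ [m] with |X ∩ S| = m/3 and |X ∩ ([m] ∖ S)| = m/6, and independently let B be drawn uniformly at random from all sets X ⊆ [m] with |X ∩ T| = m/3 and |X ∩ ([m] ∖ T)| = m/6. Then the Bernoulli random variables X_i = 1[i ∈ A ∪ B], for i ∈ [m], are negatively correlated: for every I ⊆ [m], Pr[∀ i ∈ I, X_i = 1] ≤ ∏_{i ∈ I} Pr[X_i = 1]. -/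
open Finset

/-- The family of "random clauses" correlated with a hidden set `S`: all sets `X ⊆ [m]`
with `|X ∩ S| = m/3` and `|X ∩ ([m] ∖ S)| = m/6`. -/
def clauseFamily {m : ℕ} (S : Finset (Fin m)) : Finset (Finset (Fin m)) :=
  Finset.univ.filter fun X => (X ∩ S).card = m / 3 ∧ (X ∩ Sᶜ).card = m / 6


/-- Key binomial inequality: `C(n-j, k-j) * n^j ≤ C(n,k) * k^j` for `j ≤ k ≤ n`. -/
lemma choose_pow_le (n k j : ℕ) (hjk : j ≤ k) (hkn : k ≤ n) :
    Nat.choose (n - j) (k - j) * n ^ j ≤ Nat.choose n k * k ^ j := by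
  induction j with
  | zero => simp
  | succ j ih =>
    have hjk' : j ≤ k := Nat.le_of_succ_le hjk
    have ih' := ih hjk'
    have hjn : j + 1 ≤ n := le_trans hjk hkn
    have hnj : 0 < n - j := by omega
    -- identity : (n-j) * C(n-j-1, k-j-1) = C(n-j, k-j) * (k-j)
    have hid : (n - j) * Nat.choose (n - j - 1) (k - j - 1) =
        Nat.choose (n - j) (k - j) * (k - j) := by
      have := Nat.add_one_mul_choose_eq (n - j - 1) (k - j - 1)
      have h1 : n - j - 1 + 1 = n - j := by omega
      have h2 : k - j - 1 + 1 = k - j := by omega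
      rw [h1, h2] at this
      exact this
    have key : (k - j) * n ≤ (n - j) * k := by
      have h1 : k * n - j * n ≤ k * n - j * k :=
        Nat.sub_le_sub_left (Nat.mul_le_mul_left j hkn) (k * n)
      calc (k - j) * n = k * n - j * n := by rw [Nat.sub_mul]
        _ ≤ k * n - j * k := h1
        _ = n * k - j * k := by ring_nf
        _ = (n - j) * k := by rw [Nat.sub_mul]
    refine Nat.le_of_mul_le_mul_left ?_ hnj
    have hsub1 : n - (j+1) = n - j - 1 := by omega
    have hsub2 : k - (j+1) = k - j - 1 := by omega
    calc (n - j) * (Nat.choose (n - (j+1)) (k - (j+1)) * n ^ (j+1))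
        = ((n - j) * Nat.choose (n - j - 1) (k - j - 1)) * (n * n ^ j) := by
          rw [hsub1, hsub2, pow_succ]; ring
      _ = (Nat.choose (n - j) (k - j) * (k - j)) * (n * n ^ j) := by rw [hid]
      _ = ((k - j) * n) * (Nat.choose (n - j) (k - j) * n ^ j) := by ring
      _ ≤ ((n - j) * k) * (Nat.choose n k * k ^ j) :=
          Nat.mul_le_mul key ih'
      _ = (n - j) * (Nat.choose n k * k ^ (j+1)) := by rw [pow_succ]; ring

/-- count of k-subsets of U containing a fixed J ⊆ U, J.card ≤ k -/
lemma cnt_eq {α : Type*} [DecidableEq α] (U : Finset α) (k : ℕ) (J : Finset α)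
    (hJU : J ⊆ U) (hJk : J.card ≤ k) :
    ((U.powersetCard k).filter (fun X => J ⊆ X)).card
      = Nat.choose (U.card - J.card) (k - J.card) := by
  rw [← Finset.card_sdiff_of_subset hJU, ← Finset.card_powersetCard (k - J.card) (U \ J)]
  apply Finset.card_nbij' (fun X => X \ J) (fun Z => Z ∪ J)
  · intro X hX
    simp only [mem_coe, mem_filter, mem_powersetCard] at hX ⊢
    obtain ⟨⟨hXU, hXc⟩, hJX⟩ := hX
    refine ⟨fun x hx => ?_, ?_⟩
    · simp only [mem_sdiff] at hx ⊢; exact ⟨hXU hx.1, hx.2⟩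
    · rw [Finset.card_sdiff_of_subset hJX, hXc]
  · intro Z hZ
    simp only [mem_coe, mem_filter, mem_powersetCard] at hZ ⊢
    obtain ⟨hZU, hZc⟩ := hZ
    have hdisj : Disjoint Z J := by
      refine Finset.disjoint_left.mpr ?_
      intro a ha haJ
      exact (Finset.mem_sdiff.mp (hZU ha)).2 haJ
    refine ⟨⟨?_, ?_⟩, Finset.subset_union_right⟩
    · intro x hx
      rcases Finset.mem_union.mp hx with h | h
      · exact (Finset.mem_sdiff.mp (hZU h)).1
      · exact hJU h
    · rw [Finset.card_union_of_disjoint hdisj, hZc]; omega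
  · intro X hX
    simp only [mem_coe, mem_filter, mem_powersetCard] at hX
    exact Finset.sdiff_union_of_subset hX.2
  · intro Z hZ
    simp only [mem_coe, mem_filter, mem_powersetCard] at hZ
    apply Finset.union_sdiff_cancel_right
    refine Finset.disjoint_left.mpr ?_
    intro a ha haJ
    exact (Finset.mem_sdiff.mp (hZ.1 ha)).2 haJ

lemma cnt_eq_zero {α : Type*} [DecidableEq α] (U : Finset α) (k : ℕ) (J : Finset α)
    (hJk : k < J.card) :
    ((U.powersetCard k).filter (fun X => J ⊆ X)).card = 0 := by
  rw [Finset.card_eq_zero]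
  apply Finset.filter_false_of_mem
  intro X hX hJX
  have := Finset.card_le_card hJX
  rw [(Finset.mem_powersetCard.mp hX).2] at this
  omega

/-- singleton exact: `count({i}) * n = C(n,k) * k` -/
lemma cnt_singleton {α : Type*} [DecidableEq α] (U : Finset α) (k : ℕ) (i : α)
    (hi : i ∈ U) :
    ((U.powersetCard k).filter (fun X => i ∈ X)).card * U.card
      = Nat.choose U.card k * k := by
  have hrw : (U.powersetCard k).filter (fun X => i ∈ X)
      = (U.powersetCard k).filter (fun X => ({i} : Finset α) ⊆ X) := by
    apply Finset.filter_congr; intro X _; simp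
  rcases Nat.eq_zero_or_pos k with hk | hk
  · subst hk
    rw [hrw, cnt_eq_zero U 0 {i} (by simp)]
    simp
  · have hn : 0 < U.card := Finset.card_pos.mpr ⟨i, hi⟩
    rw [hrw, cnt_eq U k {i} (by simpa using hi) (by rw [Finset.card_singleton]; omega), Finset.card_singleton]
    have := Nat.add_one_mul_choose_eq (U.card - 1) (k - 1)
    have h1 : U.card - 1 + 1 = U.card := by omega
    have h2 : k - 1 + 1 = k := by omega
    rw [h1, h2] at this
    rw [Nat.mul_comm]
    exact this

lemma union_inter_left {m : ℕ} {S Y Z : Finset (Fin m)} (hY : Y ⊆ S) (hZ : Z ⊆ Sᶜ) :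
    (Y ∪ Z) ∩ S = Y := by
  ext x
  simp only [mem_inter, mem_union]
  constructor
  · rintro ⟨h | h, hS⟩
    · exact h
    · exact absurd hS (by simpa using hZ h)
  · intro h; exact ⟨Or.inl h, hY h⟩

lemma union_inter_right {m : ℕ} {S Y Z : Finset (Fin m)} (hY : Y ⊆ S) (hZ : Z ⊆ Sᶜ) :
    (Y ∪ Z) ∩ Sᶜ = Z := by
  rw [Finset.union_comm]
  exact union_inter_left hZ (by simpa using hY)

lemma clause_count {m : ℕ} (S : Finset (Fin m)) (J : Finset (Fin m)) :
    ((clauseFamily S).filter (fun A => J ⊆ A)).card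
      = ((S.powersetCard (m/3)).filter (fun Y => J ∩ S ⊆ Y)).card
        * ((Sᶜ.powersetCard (m/6)).filter (fun Z => J ∩ Sᶜ ⊆ Z)).card := by
  rw [← Finset.card_product]
  apply Finset.card_nbij' (fun X => (X ∩ S, X ∩ Sᶜ)) (fun p => p.1 ∪ p.2)
  · intro X hX
    simp only [mem_coe, clauseFamily, mem_filter, mem_univ, true_and, Finset.mem_product,
      mem_powersetCard] at hX ⊢
    obtain ⟨⟨h1, h2⟩, hJ⟩ := hX
    exact ⟨⟨⟨Finset.inter_subset_right, h1⟩, Finset.inter_subset_inter hJ (subset_refl S)⟩,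
      ⟨⟨Finset.inter_subset_right, h2⟩, Finset.inter_subset_inter hJ (subset_refl Sᶜ)⟩⟩
  · rintro ⟨Y, Z⟩ hp
    simp only [mem_coe, Finset.mem_product, mem_filter, mem_powersetCard] at hp
    obtain ⟨⟨⟨hYS, hYc⟩, hJY⟩, ⟨hZS, hZc⟩, hJZ⟩ := hp
    simp only [mem_coe, clauseFamily, mem_filter, mem_univ, true_and]
    rw [union_inter_left hYS hZS, union_inter_right hYS hZS]
    refine ⟨⟨hYc, hZc⟩, ?_⟩
    intro x hx
    by_cases hxS : x ∈ S
    · exact Finset.mem_union_left _ (hJY (Finset.mem_inter.mpr ⟨hx, hxS⟩))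
    · exact Finset.mem_union_right _ (hJZ (Finset.mem_inter.mpr ⟨hx, by simpa using hxS⟩))
  · intro X _
    dsimp only
    rw [← Finset.inter_union_distrib_left, Finset.union_compl, Finset.inter_univ]
  · rintro ⟨Y, Z⟩ hp
    simp only [mem_coe, Finset.mem_product, mem_filter, mem_powersetCard] at hp
    obtain ⟨⟨⟨hYS, _⟩, _⟩, ⟨hZS, _⟩, _⟩ := hp
    simp only [Prod.mk.injEq]
    exact ⟨union_inter_left hYS hZS, union_inter_right hYS hZS⟩

section slice
variable {α : Type*} [DecidableEq α]

lemma slice_bound_real (U : Finset α) (k : ℕ) (hk : k ≤ U.card) (hU : 0 < U.card)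
    (Y : Finset α) (hYU : Y ⊆ U) :
    (((U.powersetCard k).filter (fun X => Y ⊆ X)).card : ℝ)
      ≤ (Nat.choose U.card k : ℝ) * ((k : ℝ) / (U.card : ℝ)) ^ Y.card := by
  rcases le_or_gt Y.card k with h | h
  · rw [cnt_eq U k Y hYU h]
    have hnat := choose_pow_le U.card k Y.card h hk
    have hnpos : (0 : ℝ) < (U.card : ℝ) ^ Y.card := by positivity
    rw [div_pow, ← mul_div_assoc, le_div_iff₀ hnpos]
    calc ((Nat.choose (U.card - Y.card) (k - Y.card) : ℝ)) * (U.card : ℝ) ^ Y.card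
        = ((Nat.choose (U.card - Y.card) (k - Y.card) * U.card ^ Y.card : ℕ) : ℝ) := by
          push_cast; ring
      _ ≤ ((Nat.choose U.card k * k ^ Y.card : ℕ) : ℝ) := by exact_mod_cast hnat
      _ = (Nat.choose U.card k : ℝ) * (k : ℝ) ^ Y.card := by push_cast; ring
  · rw [cnt_eq_zero U k Y h]
    simp only [Nat.cast_zero]
    positivity

lemma slice_singleton_real (U : Finset α) (k : ℕ) (i : α) (hi : i ∈ U) :
    (((U.powersetCard k).filter (fun X => i ∈ X)).card : ℝ)
      = (Nat.choose U.card k : ℝ) * ((k : ℝ) / (U.card : ℝ)) := by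
  have hU : 0 < U.card := Finset.card_pos.mpr ⟨i, hi⟩
  have hnat := cnt_singleton U k i hi
  have hUr : (0 : ℝ) < (U.card : ℝ) := by exact_mod_cast hU
  rw [← mul_div_assoc, eq_div_iff (ne_of_gt hUr)]
  exact_mod_cast hnat

lemma slice_full (U : Finset α) (k : ℕ) :
    ((U.powersetCard k).filter (fun X => (∅ : Finset α) ⊆ X)).card
      = Nat.choose U.card k := by
  rw [Finset.filter_true_of_mem (fun X _ => Finset.empty_subset X), Finset.card_powersetCard]

end slice

lemma filter_not_mem_eq_inter_compl {m : ℕ} (J S : Finset (Fin m)) :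
    J.filter (fun i => ¬ i ∈ S) = J ∩ Sᶜ := by
  ext x; simp

lemma clause_card {m r : ℕ} (hm : m = 6*r) {S : Finset (Fin m)} (hS : S.card = m/2) :
    (clauseFamily S).card = Nat.choose (3*r) (2*r) * Nat.choose (3*r) r := by
  have h1 : S.card = 3*r := by omega
  have h2 : Sᶜ.card = 3*r := by
    rw [Finset.card_compl, Fintype.card_fin]; omega
  have h := clause_count S ∅
  simp only [Finset.empty_inter] at h
  rw [Finset.filter_true_of_mem (fun X _ => Finset.empty_subset X)] at h
  rw [slice_full, slice_full, h1, h2] at h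
  have hk1 : m/3 = 2*r := by omega
  have hk2 : m/6 = r := by omega
  rw [hk1, hk2] at h
  rw [h]

lemma famNC {m r : ℕ} (hm : m = 6*r) (hr : 0 < r) {S : Finset (Fin m)}
    (hS : S.card = m/2) (J : Finset (Fin m)) :
    (((clauseFamily S).filter (fun A => J ⊆ A)).card : ℝ)
      ≤ ((clauseFamily S).card : ℝ)
        * ∏ i ∈ J, ((((clauseFamily S).filter (fun A => i ∈ A)).card : ℝ)
            / ((clauseFamily S).card : ℝ)) := by
  have h1 : S.card = 3*r := by omega
  have h2 : Sᶜ.card = 3*r := by rw [Finset.card_compl, Fintype.card_fin]; omega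
  have hk1 : m/3 = 2*r := by omega
  have hk2 : m/6 = r := by omega
  have hn : (0:ℕ) < 3*r := by omega
  set C1 := Nat.choose (3*r) (2*r) with hC1
  set C2 := Nat.choose (3*r) r with hC2
  have hNnat : (clauseFamily S).card = C1 * C2 := clause_card hm hS
  have hC1pos : 0 < C1 := Nat.choose_pos (by omega)
  have hC2pos : 0 < C2 := Nat.choose_pos (by omega)
  have hNpos : (0:ℝ) < ((clauseFamily S).card : ℝ) := by
    rw [hNnat]; exact_mod_cast Nat.mul_pos hC1pos hC2pos
  -- pointwise probabilities
  have hpoint : ∀ i : Fin m,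
      ((((clauseFamily S).filter (fun A => i ∈ A)).card : ℝ)
        / ((clauseFamily S).card : ℝ))
      = if i ∈ S then ((2*r : ℕ) : ℝ) / ((3*r : ℕ) : ℝ)
        else ((r : ℕ) : ℝ) / ((3*r : ℕ) : ℝ) := by
    intro i
    have hfilt : (clauseFamily S).filter (fun A => i ∈ A)
        = (clauseFamily S).filter (fun A => ({i} : Finset (Fin m)) ⊆ A) := by
      apply Finset.filter_congr; intro X _; simp
    rw [hfilt, clause_count S {i}]
    by_cases hiS : i ∈ S
    · have e1 : ({i} : Finset (Fin m)) ∩ S = {i} := by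
        rw [Finset.inter_eq_left]; simpa using hiS
      have e2 : ({i} : Finset (Fin m)) ∩ Sᶜ = ∅ := by
        ext x; simp only [mem_inter, mem_singleton, mem_compl, Finset.notMem_empty,
          iff_false, not_and]
        rintro rfl; simpa using hiS
      rw [e1, e2]
      have hsing : ((S.powersetCard (m/3)).filter (fun Y => ({i} : Finset (Fin m)) ⊆ Y))
          = (S.powersetCard (m/3)).filter (fun Y => i ∈ Y) := by
        apply Finset.filter_congr; intro X _; simp
      rw [hsing, if_pos hiS]
      push_cast [slice_full]
      rw [slice_singleton_real S (m/3) i hiS, h1, h2, hk1, hk2, hNnat]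
      push_cast
      rw [← hC1, ← hC2]
      field_simp
    · have e1 : ({i} : Finset (Fin m)) ∩ S = ∅ := by
        ext x; simp only [mem_inter, mem_singleton, Finset.notMem_empty, iff_false, not_and]
        rintro rfl; exact hiS
      have e2 : ({i} : Finset (Fin m)) ∩ Sᶜ = {i} := by
        rw [Finset.inter_eq_left]; simpa using hiS
      rw [e1, e2]
      have hsing : ((Sᶜ.powersetCard (m/6)).filter (fun Y => ({i} : Finset (Fin m)) ⊆ Y))
          = (Sᶜ.powersetCard (m/6)).filter (fun Y => i ∈ Y) := by
        apply Finset.filter_congr; intro X _; simp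
      rw [hsing, if_neg hiS]
      push_cast [slice_full]
      rw [slice_singleton_real Sᶜ (m/6) i (by simpa using hiS), h1, h2, hk1, hk2, hNnat]
      push_cast
      rw [← hC1, ← hC2]
      field_simp
  -- product of pointwise probabilities
  have hprodeq : ∏ i ∈ J, ((((clauseFamily S).filter (fun A => i ∈ A)).card : ℝ)
            / ((clauseFamily S).card : ℝ))
      = (((2*r : ℕ) : ℝ) / ((3*r : ℕ) : ℝ)) ^ (J ∩ S).card
        * (((r : ℕ) : ℝ) / ((3*r : ℕ) : ℝ)) ^ (J ∩ Sᶜ).card := by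
    rw [Finset.prod_congr rfl (fun i _ => hpoint i), Finset.prod_ite, Finset.prod_const,
      Finset.prod_const, Finset.filter_mem_eq_inter, filter_not_mem_eq_inter_compl]
  rw [hprodeq, clause_count S J]
  have hb1 := slice_bound_real S (m/3) (by omega) (by omega) (J ∩ S)
    Finset.inter_subset_right
  have hb2 := slice_bound_real Sᶜ (m/6) (by omega) (by omega) (J ∩ Sᶜ)
    Finset.inter_subset_right
  rw [h1, hk1] at hb1
  rw [h2, hk2] at hb2
  rw [hk1, hk2]
  calc ((((S.powersetCard (2*r)).filter (fun Y => J ∩ S ⊆ Y)).card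
          * ((Sᶜ.powersetCard r).filter (fun Z => J ∩ Sᶜ ⊆ Z)).card : ℕ) : ℝ)
      = (((S.powersetCard (2*r)).filter (fun Y => J ∩ S ⊆ Y)).card : ℝ)
        * (((Sᶜ.powersetCard r).filter (fun Z => J ∩ Sᶜ ⊆ Z)).card : ℝ) := by
        push_cast; ring
    _ ≤ ((C1 : ℝ) * (((2*r : ℕ):ℝ) / ((3*r : ℕ):ℝ)) ^ (J ∩ S).card)
        * ((C2 : ℝ) * (((r : ℕ):ℝ) / ((3*r : ℕ):ℝ)) ^ (J ∩ Sᶜ).card) := by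
        apply mul_le_mul hb1 hb2 (by positivity) (by positivity)
    _ = ((clauseFamily S).card : ℝ)
        * ((((2*r : ℕ):ℝ) / ((3*r : ℕ):ℝ)) ^ (J ∩ S).card
          * (((r : ℕ):ℝ) / ((3*r : ℕ):ℝ)) ^ (J ∩ Sᶜ).card) := by
        rw [hNnat]; push_cast; ring


/-- if `A` and `B` are drawn independently and uniformly from the clause
families of `S` and `T` respectively, where `|S| = |T| = m/2` and `|S ∩ T| = m/3`, then
the indicators `X_i = 1[i ∈ A ∪ B]` are negatively correlated: for every `I ⊆ [m]`,
`Pr[I ⊆ A ∪ B] ≤ ∏_{i ∈ I} Pr[i ∈ A ∪ B]`. -/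
theorem stmt16 {m : ℕ} (hm : 0 < m) (h6 : 6 ∣ m)
    (S T : Finset (Fin m)) (hS : S.card = m / 2) (hT : T.card = m / 2)
    (hST : (S ∩ T).card = m / 3) :
    ∀ I : Finset (Fin m),
      ((((clauseFamily S ×ˢ clauseFamily T).filter
            fun p => I ⊆ p.1 ∪ p.2).card : ℝ)
          / (((clauseFamily S).card : ℝ) * ((clauseFamily T).card : ℝ)))
        ≤ ∏ i ∈ I,
            ((((clauseFamily S ×ˢ clauseFamily T).filter
                  fun p => i ∈ p.1 ∪ p.2).card : ℝ)
              / (((clauseFamily S).card : ℝ) * ((clauseFamily T).card : ℝ))) := by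
  
  obtain ⟨r, hm6⟩ := h6
  have hr : 0 < r := by omega
  intro I
  have hNSpos : (0:ℝ) < ((clauseFamily S).card : ℝ) := by
    rw [clause_card hm6 hS]
    have h1 := Nat.choose_pos (show 2*r ≤ 3*r by omega)
    have h2 := Nat.choose_pos (show r ≤ 3*r by omega)
    have := Nat.mul_pos h1 h2
    exact_mod_cast this
  have hNTpos : (0:ℝ) < ((clauseFamily T).card : ℝ) := by
    rw [clause_card hm6 hT]
    have h1 := Nat.choose_pos (show 2*r ≤ 3*r by omega)
    have h2 := Nat.choose_pos (show r ≤ 3*r by omega)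
    have := Nat.mul_pos h1 h2
    exact_mod_cast this
  set pS : Fin m → ℝ := fun i =>
    (((clauseFamily S).filter (fun A => i ∈ A)).card : ℝ) / ((clauseFamily S).card : ℝ)
    with hpSdef
  set pT : Fin m → ℝ := fun i =>
    (((clauseFamily T).filter (fun A => i ∈ A)).card : ℝ) / ((clauseFamily T).card : ℝ)
    with hpTdef
  have hfamS : ∀ J : Finset (Fin m),
      (((clauseFamily S).filter (fun A => J ⊆ A)).card : ℝ)
        ≤ ((clauseFamily S).card : ℝ) * ∏ i ∈ J, pS i := fun J => famNC hm6 hr hS J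
  have hfamT : ∀ J : Finset (Fin m),
      (((clauseFamily T).filter (fun A => J ⊆ A)).card : ℝ)
        ≤ ((clauseFamily T).card : ℝ) * ∏ i ∈ J, pT i := fun J => famNC hm6 hr hT J
  have hpS0 : ∀ i, 0 ≤ pS i := fun i => by
    simp only [hpSdef]; positivity
  have hpT0 : ∀ i, 0 ≤ pT i := fun i => by
    simp only [hpTdef]; positivity
  have hpS1 : ∀ i, pS i ≤ 1 := fun i => by
    simp only [hpSdef]
    apply div_le_one_of_le₀ _ (le_of_lt hNSpos)
    exact_mod_cast Finset.card_filter_le _ _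
  have hpT1 : ∀ i, pT i ≤ 1 := fun i => by
    simp only [hpTdef]
    apply div_le_one_of_le₀ _ (le_of_lt hNTpos)
    exact_mod_cast Finset.card_filter_le _ _
  -- Step 1 : numerator as a sum over B
  have hL : ((((clauseFamily S ×ˢ clauseFamily T).filter
        fun p => I ⊆ p.1 ∪ p.2).card : ℝ))
      = ∑ B ∈ clauseFamily T,
          (((clauseFamily S).filter fun A => I \ B ⊆ A).card : ℝ) := by
    have hnat : ((clauseFamily S ×ˢ clauseFamily T).filter
          fun p => I ⊆ p.1 ∪ p.2).card
        = ∑ B ∈ clauseFamily T, ((clauseFamily S).filter fun A => I \ B ⊆ A).card := by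
      rw [Finset.card_filter, Finset.sum_product, Finset.sum_comm]
      apply Finset.sum_congr rfl
      intro B _
      rw [Finset.card_filter]
      apply Finset.sum_congr rfl
      intro A _
      refine if_congr ?_ rfl rfl
      constructor
      · intro h x hx
        have hx' := Finset.mem_sdiff.mp hx
        rcases Finset.mem_union.mp (h hx'.1) with h' | h'
        · exact h'
        · exact absurd h' hx'.2
      · intro h x hx
        by_cases hxB : x ∈ B
        · exact Finset.mem_union_right _ hxB
        · exact Finset.mem_union_left _ (h (Finset.mem_sdiff.mpr ⟨hx, hxB⟩))
    rw [hnat]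
    push_cast
    rfl
  -- Step 2 : main estimate on the numerator
  have hmain : ((((clauseFamily S ×ˢ clauseFamily T).filter
        fun p => I ⊆ p.1 ∪ p.2).card : ℝ))
      ≤ ((clauseFamily S).card : ℝ) * ((clauseFamily T).card : ℝ)
          * ∏ i ∈ I, ((1 - pS i) * pT i + pS i) := by
    rw [hL]
    calc ∑ B ∈ clauseFamily T,
          (((clauseFamily S).filter fun A => I \ B ⊆ A).card : ℝ)
        ≤ ∑ B ∈ clauseFamily T,
            ((clauseFamily S).card : ℝ) * ∏ i ∈ I \ B, pS i :=
          Finset.sum_le_sum (fun B _ => hfamS (I \ B))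
      _ = ((clauseFamily S).card : ℝ) * ∑ B ∈ clauseFamily T,
            ∑ K ∈ I.powerset,
              (∏ i ∈ K, ((1 - pS i) * (if i ∈ B then (1:ℝ) else 0)))
                * ∏ i ∈ I \ K, pS i := by
          rw [Finset.mul_sum]
          apply Finset.sum_congr rfl
          intro B _
          congr 1
          rw [← Finset.prod_add, Finset.sdiff_eq_filter, Finset.prod_filter]
          apply Finset.prod_congr rfl
          intro i _
          by_cases h : i ∈ B
          · simp only [h, if_true, not_true, if_false]
            ring
          · simp only [h, if_false, not_false_iff, if_true]
            ring
      _ = ((clauseFamily S).card : ℝ) * ∑ K ∈ I.powerset,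
            ((∏ i ∈ K, (1 - pS i)) * ∏ i ∈ I \ K, pS i)
              * (((clauseFamily T).filter fun B => K ⊆ B).card : ℝ) := by
          congr 1
          rw [Finset.sum_comm]
          apply Finset.sum_congr rfl
          intro K _
          rw [← Finset.sum_boole, Finset.mul_sum]
          apply Finset.sum_congr rfl
          intro B _
          rw [Finset.prod_mul_distrib]
          have hind : (∏ i ∈ K, (if i ∈ B then (1:ℝ) else 0))
              = if K ⊆ B then (1:ℝ) else 0 := by
            by_cases h : K ⊆ B
            · rw [if_pos h]
              exact Finset.prod_eq_one (fun i hi => if_pos (h hi))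
            · rw [if_neg h]
              obtain ⟨i, hiK, hiB⟩ := Finset.not_subset.mp h
              exact Finset.prod_eq_zero hiK (if_neg hiB)
          rw [hind]
          ring
      _ ≤ ((clauseFamily S).card : ℝ) * ∑ K ∈ I.powerset,
            ((∏ i ∈ K, (1 - pS i)) * ∏ i ∈ I \ K, pS i)
              * (((clauseFamily T).card : ℝ) * ∏ i ∈ K, pT i) := by
          apply mul_le_mul_of_nonneg_left _ (le_of_lt hNSpos)
          apply Finset.sum_le_sum
          intro K _
          apply mul_le_mul_of_nonneg_left (hfamT K)
          apply mul_nonneg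
          · exact Finset.prod_nonneg (fun i _ => by linarith [hpS1 i])
          · exact Finset.prod_nonneg (fun i _ => hpS0 i)
      _ = ((clauseFamily S).card : ℝ) * ((clauseFamily T).card : ℝ)
            * ∏ i ∈ I, ((1 - pS i) * pT i + pS i) := by
          conv_rhs => rw [Finset.prod_add, Finset.mul_sum]
          conv_lhs => rw [Finset.mul_sum]
          apply Finset.sum_congr rfl
          intro K _
          rw [Finset.prod_mul_distrib]
          ring
  -- Step 3 : compute each factor of the RHS
  have hfac : ∀ i : Fin m,
      ((((clauseFamily S ×ˢ clauseFamily T).filter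
            fun p => i ∈ p.1 ∪ p.2).card : ℝ)
          / (((clauseFamily S).card : ℝ) * ((clauseFamily T).card : ℝ)))
        = (1 - pS i) * pT i + pS i := by
    intro i
    have h2 : (clauseFamily S ×ˢ clauseFamily T).filter (fun p => ¬ (i ∈ p.1 ∪ p.2))
        = ((clauseFamily S).filter fun A => ¬ i ∈ A)
            ×ˢ ((clauseFamily T).filter fun B => ¬ i ∈ B) := by
      rw [← Finset.filter_product]
      apply Finset.filter_congr
      intro p _
      simp [Finset.mem_union, not_or]
    have h1 := Finset.card_filter_add_card_filter_not
      (s := clauseFamily S ×ˢ clauseFamily T) (fun p => i ∈ p.1 ∪ p.2)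
    rw [h2, Finset.card_product, Finset.card_product] at h1
    have h3 := Finset.card_filter_add_card_filter_not
      (s := clauseFamily S) (fun A => i ∈ A)
    have h4 := Finset.card_filter_add_card_filter_not
      (s := clauseFamily T) (fun B => i ∈ B)
    have h1' : ((((clauseFamily S ×ˢ clauseFamily T).filter
          fun p => i ∈ p.1 ∪ p.2).card : ℝ))
        + (((clauseFamily S).filter fun A => ¬ i ∈ A).card : ℝ)
          * (((clauseFamily T).filter fun B => ¬ i ∈ B).card : ℝ)
        = ((clauseFamily S).card : ℝ) * ((clauseFamily T).card : ℝ) := by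
      exact_mod_cast congrArg (Nat.cast : ℕ → ℝ) h1
    have h3' : (((clauseFamily S).filter fun A => ¬ i ∈ A).card : ℝ)
        = ((clauseFamily S).card : ℝ)
          - (((clauseFamily S).filter fun A => i ∈ A).card : ℝ) := by
      have := congrArg (Nat.cast : ℕ → ℝ) h3
      push_cast at this
      linarith
    have h4' : (((clauseFamily T).filter fun B => ¬ i ∈ B).card : ℝ)
        = ((clauseFamily T).card : ℝ)
          - (((clauseFamily T).filter fun B => i ∈ B).card : ℝ) := by
      have := congrArg (Nat.cast : ℕ → ℝ) h4
      push_cast at this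
      linarith
    rw [h3', h4'] at h1'
    have haS : (((clauseFamily S).filter fun A => i ∈ A).card : ℝ)
        = pS i * ((clauseFamily S).card : ℝ) := by
      simp only [hpSdef]
      field_simp
    have haT : (((clauseFamily T).filter fun B => i ∈ B).card : ℝ)
        = pT i * ((clauseFamily T).card : ℝ) := by
      simp only [hpTdef]
      exact (div_mul_cancel₀ _ (ne_of_gt hNTpos)).symm
    rw [haS, haT] at h1'
    rw [div_eq_iff (ne_of_gt (mul_pos hNSpos hNTpos))]
    linear_combination h1'
  -- Final assembly
  rw [Finset.prod_congr rfl (fun i _ => hfac i)]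
  rw [div_le_iff₀ (mul_pos hNSpos hNTpos)]
  calc ((((clauseFamily S ×ˢ clauseFamily T).filter
        fun p => I ⊆ p.1 ∪ p.2).card : ℝ))
      ≤ ((clauseFamily S).card : ℝ) * ((clauseFamily T).card : ℝ)
          * ∏ i ∈ I, ((1 - pS i) * pT i + pS i) := hmain
    _ = (∏ i ∈ I, ((1 - pS i) * pT i + pS i))
          * (((clauseFamily S).card : ℝ) * ((clauseFamily T).card : ℝ)) := by ring
end

section
/- Let m be a positive integer divisible by 6, and let S, T ⊆ [m] with |S| = |T| = m/2 and |S ∩ T| = m/3. Let A be drawn uniformly at random from all sets X ⊆ [m] with |X ∩ S| = m/3 and |X ∩ ([m] ∖ S)| = m/6, and independently let B be drawn uniformly at random from all sets X ⊆ [m] with |X ∩ T| = m/3 and |X ∩ ([m] ∖ T)| = m/6. Then for every ε > 0, Pr[|A ∪ B| ≥ (20/27 + ε)·m] ≤ exp(−2ε²m). -/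
open Finset

lemma bern_pos {p : ℝ} (hp0 : 0 ≤ p) (hp1 : p ≤ 1) (s : ℝ) :
    0 < 1 + (Real.exp s - 1) * p := by
  have h := Real.exp_pos s
  rcases eq_or_lt_of_le hp0 with h0 | h0
  · simp [← h0]
  · nlinarith [mul_pos h0 h]

lemma hoeffding_scalar {p : ℝ} (hp0 : 0 ≤ p) (hp1 : p ≤ 1) {t : ℝ} (ht : 0 ≤ t) :
    1 + (Real.exp t - 1) * p ≤ Real.exp (t * p + t ^ 2 / 8) := by
  set d : ℝ → ℝ := fun s => 1 + (Real.exp s - 1) * p with hd_def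
  have hdpos : ∀ s, 0 < d s := fun s => bern_pos hp0 hp1 s
  have hd : ∀ s, HasDerivAt d (Real.exp s * p) s := by
    intro s
    have : HasDerivAt (fun s => 1 + (Real.exp s - 1) * p) (Real.exp s * p) s := by
      simpa using (((Real.hasDerivAt_exp s).sub_const 1).mul_const p).const_add 1
    exact this
  set g : ℝ → ℝ := fun s => p + s / 4 - Real.exp s * p / d s with hg_def
  have hg : ∀ s, HasDerivAt g
      (1 / 4 - (Real.exp s * p * d s - Real.exp s * p * (Real.exp s * p)) / (d s) ^ 2) s := by
    intro s
    have h1 : HasDerivAt (fun s : ℝ => p + s / 4) (1 / 4) s := by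
      simpa using ((hasDerivAt_id s).div_const 4).const_add p
    have h2 : HasDerivAt (fun s => Real.exp s * p / d s)
        ((Real.exp s * p * d s - Real.exp s * p * (Real.exp s * p)) / (d s) ^ 2) s :=
      ((Real.hasDerivAt_exp s).mul_const p).div (hd s) (hdpos s).ne'
    exact h1.sub h2
  have hg_mono : Monotone g := by
    refine monotone_of_hasDerivAt_nonneg hg fun s => ?_
    show (0:ℝ) ≤ _
    have hds := hdpos s
    have he := Real.exp_pos s
    have key : (Real.exp s * p * d s - Real.exp s * p * (Real.exp s * p)) / (d s) ^ 2 ≤ 1 / 4 := by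
      rw [div_le_iff₀ (by positivity)]
      have hdd : d s = (1 - p) + p * Real.exp s := by simp [hd_def]; ring
      have : Real.exp s * p * d s - Real.exp s * p * (Real.exp s * p)
          = (p * Real.exp s) * (1 - p) := by rw [hdd]; ring
      rw [this, hdd]
      nlinarith [sq_nonneg ((1 - p) - p * Real.exp s)]
    linarith
  have hg0 : g 0 = 0 := by simp [hg_def, hd_def]
  have hg_nonneg : ∀ s, 0 ≤ s → 0 ≤ g s := by
    intro s hs
    have := hg_mono hs
    rwa [hg0] at this
  set f : ℝ → ℝ := fun s => s * p + s ^ 2 / 8 - Real.log (d s) with hf_def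
  have hf : ∀ s, HasDerivAt f (g s) s := by
    intro s
    have h1 : HasDerivAt (fun s : ℝ => s * p + s ^ 2 / 8) (p + s / 4) s := by
      have := ((hasDerivAt_pow 2 s).div_const 8).const_add (s * p)
      have h2 : HasDerivAt (fun x : ℝ => x * p) p s := by
        simpa using (hasDerivAt_id s).mul_const p
      have := h2.add ((hasDerivAt_pow 2 s).div_const 8)
      convert this using 1
      · rfl
      · rfl
      · rfl
      · simp; ring
    have h2 : HasDerivAt (fun s => Real.log (d s)) (Real.exp s * p / d s) s :=
      (hd s).log (hdpos s).ne'
    exact h1.sub h2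
  have hf_mono : MonotoneOn f (Set.Ici 0) := by
    refine monotoneOn_of_hasDerivWithinAt_nonneg (f' := g) (convex_Ici 0) ?_ ?_ ?_
    · exact (Differentiable.continuous fun s => (hf s).differentiableAt).continuousOn
    · exact fun x _ => (hf x).hasDerivWithinAt
    · intro x hx
      rw [interior_Ici] at hx
      exact hg_nonneg x (le_of_lt hx)
  have hf0 : f 0 = 0 := by simp [hf_def, hd_def]
  have := hf_mono (Set.self_mem_Ici) (Set.mem_Ici.2 ht) ht
  rw [hf0] at this
  have hlog : Real.log (d t) ≤ t * p + t ^ 2 / 8 := by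
    simp only [hf_def] at this; linarith
  exact (Real.log_le_iff_le_exp (hdpos t)).1 hlog

variable {α : Type*} [DecidableEq α]

/-- Number of k-subsets of U containing a fixed K ⊆ U. -/
lemma count_supersets (U K : Finset α) (k : ℕ) (hKU : K ⊆ U) (hk : K.card ≤ k) :
    ((U.powersetCard k).filter (fun X => K ⊆ X)).card
      = Nat.choose (U.card - K.card) (k - K.card) := by
  rw [← Finset.card_sdiff_of_subset hKU, ← Finset.card_powersetCard]
  refine Finset.card_bij' (fun X _ => X \ K) (fun Y _ => Y ∪ K) ?_ ?_ ?_ ?_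
  · intro X hX
    simp only [mem_filter, mem_powersetCard] at hX ⊢
    obtain ⟨⟨hXU, hXk⟩, hKX⟩ := hX
    refine ⟨fun x hx => ?_, ?_⟩
    · simp only [mem_sdiff] at hx ⊢
      exact ⟨hXU hx.1, hx.2⟩
    · rw [card_sdiff_of_subset hKX, hXk]
  · intro Y hY
    simp only [mem_filter, mem_powersetCard] at hY ⊢
    obtain ⟨hYU, hYk⟩ := hY
    have hdisj : Disjoint Y K := by
      refine disjoint_left.2 fun x hx hxK => ?_
      exact (mem_sdiff.1 (hYU hx)).2 hxK
    refine ⟨⟨?_, ?_⟩, subset_union_right⟩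
    · exact union_subset (hYU.trans (sdiff_subset)) hKU
    · rw [card_union_of_disjoint hdisj, hYk]
      omega
  · intro X hX
    simp only [mem_filter, mem_powersetCard] at hX
    exact sdiff_union_of_subset hX.2
  · intro Y hY
    simp only [mem_powersetCard] at hY
    have hdisj : Disjoint Y K := by
      refine disjoint_left.2 fun x hx hxK => ?_
      exact (mem_sdiff.1 (hY.1 hx)).2 hxK
    exact union_sdiff_cancel_right hdisj

/-- `n^j * C(n-j, k-j) ≤ k^j * C(n,k)` for `j ≤ k ≤ n`. -/
lemma choose_ratio (n k j : ℕ) (hj : j ≤ k) (hk : k ≤ n) :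
    n ^ j * Nat.choose (n - j) (k - j) ≤ k ^ j * Nat.choose n k := by
  induction j with
  | zero => simp
  | succ j ih =>
    have hj' : j ≤ k := Nat.le_of_succ_le hj
    have ihj := ih hj'
    have hjn : j < n := lt_of_lt_of_le hj hk
    -- identity: (n-j) * C(n-j-1, k-j-1) = C(n-j, k-j) * (k-j)
    have hid : (n - j) * Nat.choose (n - j - 1) (k - j - 1)
        = Nat.choose (n - j) (k - j) * (k - j) := by
      obtain ⟨a, ha⟩ : ∃ a, n - j = a + 1 := ⟨n - j - 1, by omega⟩
      obtain ⟨b, hb⟩ : ∃ b, k - j = b + 1 := ⟨k - j - 1, by omega⟩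
      have ha' : n - j - 1 = a := by omega
      have hb' : k - j - 1 = b := by omega
      rw [ha, hb]
      simpa using Nat.add_one_mul_choose_eq a b
    have hcross : n * (k - j) ≤ k * (n - j) := by
      have h1 : j ≤ n := le_of_lt hjn
      zify [hj', h1]
      have h2 : (k : ℤ) * j ≤ (n : ℤ) * j := by
        have : (k : ℤ) ≤ n := by exact_mod_cast hk
        exact mul_le_mul_of_nonneg_right this (by positivity)
      linarith
    -- main chain multiplied by (n - j)
    have key : (n ^ (j+1) * Nat.choose (n - (j+1)) (k - (j+1))) * (n - j)
        ≤ (k ^ (j+1) * Nat.choose n k) * (n - j) := by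
      have e1 : (n ^ (j+1) * Nat.choose (n - (j+1)) (k - (j+1))) * (n - j)
          = n ^ j * (n * ((n - j) * Nat.choose (n - j - 1) (k - j - 1))) := by
        have : n - (j+1) = n - j - 1 := by omega
        have : k - (j+1) = k - j - 1 := by omega
        simp only [show n - (j+1) = n - j - 1 from by omega,
          show k - (j+1) = k - j - 1 from by omega]
        ring
      rw [e1, hid]
      calc n ^ j * (n * (Nat.choose (n - j) (k - j) * (k - j)))
          = (n ^ j * Nat.choose (n - j) (k - j)) * (n * (k - j)) := by ring
        _ ≤ (k ^ j * Nat.choose n k) * (k * (n - j)) :=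
            Nat.mul_le_mul ihj hcross
        _ = (k ^ (j+1) * Nat.choose n k) * (n - j) := by ring
    exact Nat.le_of_mul_le_mul_right key (by omega)

/-- Real version: fraction of k-subsets of U containing K is at most (k/|U|)^|K|. -/
lemma count_supersets_le (U K : Finset α) (k : ℕ) (hKU : K ⊆ U) (hU : 0 < U.card)
    (hk : k ≤ U.card) :
    (((U.powersetCard k).filter (fun X => K ⊆ X)).card : ℝ)
      ≤ ((k : ℝ) / U.card) ^ K.card * (U.powersetCard k).card := by
  rcases le_or_gt K.card k with hjk | hjk
  · rw [count_supersets U K k hKU hjk, Finset.card_powersetCard]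
    have h := choose_ratio U.card k K.card hjk hk
    have hcast : (U.card : ℝ) ^ K.card * (Nat.choose (U.card - K.card) (k - K.card) : ℝ)
        ≤ (k : ℝ) ^ K.card * (Nat.choose U.card k : ℝ) := by
      exact_mod_cast h
    rw [div_pow, div_mul_eq_mul_div, le_div_iff₀ (by positivity)]
    calc (Nat.choose (U.card - K.card) (k - K.card) : ℝ) * (U.card : ℝ) ^ K.card
        = (U.card : ℝ) ^ K.card * (Nat.choose (U.card - K.card) (k - K.card) : ℝ) := by ring
      _ ≤ (k : ℝ) ^ K.card * (Nat.choose U.card k : ℝ) := hcast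
  · have : (U.powersetCard k).filter (fun X => K ⊆ X) = ∅ := by
      refine Finset.filter_eq_empty_iff.2 fun X hX hKX => ?_
      rw [mem_powersetCard] at hX
      have := Finset.card_le_card hKX
      omega
    rw [this]
    simp only [Finset.card_empty, Nat.cast_zero]
    positivity

section fam
variable {m : ℕ} (S : Finset (Fin m))

lemma split_inter_left {Y Z : Finset (Fin m)} (hY : Y ⊆ S) (hZ : Z ⊆ Sᶜ) :
    (Y ∪ Z) ∩ S = Y := by
  ext x
  simp only [mem_inter, mem_union]
  constructor
  · rintro ⟨hx | hx, hxS⟩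
    · exact hx
    · exact absurd hxS (mem_compl.1 (hZ hx))
  · exact fun hx => ⟨Or.inl hx, hY hx⟩

lemma split_inter_right {Y Z : Finset (Fin m)} (hY : Y ⊆ S) (hZ : Z ⊆ Sᶜ) :
    (Y ∪ Z) ∩ Sᶜ = Z := by
  ext x
  simp only [mem_inter, mem_union, mem_compl]
  constructor
  · rintro ⟨hx | hx, hxS⟩
    · exact absurd (hY hx) hxS
    · exact hx
  · exact fun hx => ⟨Or.inr hx, mem_compl.1 (hZ hx)⟩

lemma clauseFilter_card (K : Finset (Fin m)) :
    ((clauseFamily S).filter (fun X => K ⊆ X)).card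
      = ((S.powersetCard (m/3)).filter (fun X => K ∩ S ⊆ X)).card
        * ((Sᶜ.powersetCard (m/6)).filter (fun X => K ∩ Sᶜ ⊆ X)).card := by
  rw [← Finset.card_product]
  refine Finset.card_bij' (fun X _ => (X ∩ S, X ∩ Sᶜ)) (fun p _ => p.1 ∪ p.2) ?_ ?_ ?_ ?_
  · intro X hX
    simp only [clauseFamily, mem_filter, mem_univ, true_and] at hX
    obtain ⟨⟨h1, h2⟩, hKX⟩ := hX
    simp only [mem_product, mem_filter, mem_powersetCard]
    exact ⟨⟨⟨inter_subset_right, h1⟩, inter_subset_inter hKX Subset.rfl⟩,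
      ⟨⟨inter_subset_right, h2⟩, inter_subset_inter hKX Subset.rfl⟩⟩
  · intro p hp
    simp only [mem_product, mem_filter, mem_powersetCard] at hp
    obtain ⟨⟨⟨hY, hYc⟩, hKY⟩, ⟨⟨hZ, hZc⟩, hKZ⟩⟩ := hp
    simp only [clauseFamily, mem_filter, mem_univ, true_and]
    refine ⟨⟨?_, ?_⟩, ?_⟩
    · rw [split_inter_left S hY hZ]; exact hYc
    · rw [split_inter_right S hY hZ]; exact hZc
    · intro x hx
      by_cases hxS : x ∈ S
      · exact mem_union_left _ (hKY (mem_inter.2 ⟨hx, hxS⟩))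
      · exact mem_union_right _ (hKZ (mem_inter.2 ⟨hx, mem_compl.2 hxS⟩))
  · intro X hX
    simp only [← inter_union_distrib_left]
    simp
  · intro p hp
    simp only [mem_product, mem_filter, mem_powersetCard] at hp
    exact Prod.ext (split_inter_left S hp.1.1.1 hp.2.1.1) (split_inter_right S hp.1.1.1 hp.2.1.1)

lemma clauseFamily_card :
    (clauseFamily S).card
      = (S.powersetCard (m/3)).card * (Sᶜ.powersetCard (m/6)).card := by
  have h := clauseFilter_card S ∅
  simpa [Finset.filter_true_of_mem (fun _ _ => empty_subset _)] using h

end fam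

/-- Generic "negative correlation" expectation step: if the probability that `J ⊆ X` is at
most `∏_{i∈J} q i` for each `J`, then `E ∏_{i∈I} (w i + (1-w i)·χ_X(i)) ≤ ∏ (w i + (1-w i) q i)`
(unnormalized). -/
lemma expectation_step {γ : Type*} [DecidableEq γ] (F : Finset (Finset γ))
    (I : Finset γ) (w q : γ → ℝ)
    (hw0 : ∀ i, 0 ≤ w i) (hw1 : ∀ i, w i ≤ 1) (hq0 : ∀ i, 0 ≤ q i)
    (hF : ∀ J : Finset γ, ((F.filter fun X => J ⊆ X).card : ℝ) ≤ (∏ i ∈ J, q i) * F.card) :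
    ∑ A ∈ F, ∏ i ∈ I, ((1 - w i) * (if i ∈ A then (1:ℝ) else 0) + w i)
      ≤ (∏ i ∈ I, ((1 - w i) * q i + w i)) * F.card := by
  have expand : ∀ A : Finset γ,
      ∏ i ∈ I, ((1 - w i) * (if i ∈ A then (1:ℝ) else 0) + w i)
        = ∑ J ∈ I.powerset, (∏ i ∈ J, (1 - w i)) * (if J ⊆ A then (1:ℝ) else 0)
            * ∏ i ∈ I \ J, w i := by
    intro A
    rw [Finset.prod_add]
    refine Finset.sum_congr rfl fun J hJ => ?_
    rw [Finset.prod_mul_distrib, Finset.prod_boole]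
    congr 2
  calc ∑ A ∈ F, ∏ i ∈ I, ((1 - w i) * (if i ∈ A then (1:ℝ) else 0) + w i)
      = ∑ J ∈ I.powerset, (∏ i ∈ J, (1 - w i))
          * ((F.filter fun X => J ⊆ X).card : ℝ) * ∏ i ∈ I \ J, w i := by
        simp only [expand]
        rw [Finset.sum_comm]
        refine Finset.sum_congr rfl fun J _ => ?_
        rw [Finset.card_filter]
        push_cast
        rw [Finset.mul_sum, Finset.sum_mul]
    _ ≤ ∑ J ∈ I.powerset, (∏ i ∈ J, (1 - w i)) * ((∏ i ∈ J, q i) * F.card)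
          * ∏ i ∈ I \ J, w i := by
        refine Finset.sum_le_sum fun J _ => ?_
        have h1 : (0:ℝ) ≤ ∏ i ∈ J, (1 - w i) :=
          Finset.prod_nonneg fun i _ => by linarith [hw1 i]
        have h2 : (0:ℝ) ≤ ∏ i ∈ I \ J, w i := Finset.prod_nonneg fun i _ => hw0 i
        exact mul_le_mul_of_nonneg_right (mul_le_mul_of_nonneg_left (hF J) h1) h2
    _ = (∑ J ∈ I.powerset, (∏ i ∈ J, (1 - w i) * q i) * ∏ i ∈ I \ J, w i) * F.card := by
        rw [Finset.sum_mul]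
        refine Finset.sum_congr rfl fun J _ => ?_
        rw [Finset.prod_mul_distrib]
        ring
    _ = (∏ i ∈ I, ((1 - w i) * q i + w i)) * F.card := by rw [← Finset.prod_add]

section family
variable {m r : ℕ}

noncomputable def alf (S : Finset (Fin m)) (i : Fin m) : ℝ := if i ∈ S then 2/3 else 1/3

lemma alf_nonneg (S : Finset (Fin m)) (i : Fin m) : 0 ≤ alf S i := by
  unfold alf; split <;> norm_num

lemma alf_le_one (S : Finset (Fin m)) (i : Fin m) : alf S i ≤ 1 := by
  unfold alf; split <;> norm_num

lemma clauseFamily_filter_le (hm : m = 6*r) (hr : 0 < r) {S : Finset (Fin m)}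
    (hS : S.card = 3*r) (K : Finset (Fin m)) :
    (((clauseFamily S).filter (fun X => K ⊆ X)).card : ℝ)
      ≤ (∏ i ∈ K, alf S i) * (clauseFamily S).card := by
  have hSc : Sᶜ.card = 3*r := by
    rw [Finset.card_compl]; simp only [Fintype.card_fin]; omega
  have h3 : m/3 = 2*r := by omega
  have h6 : m/6 = r := by omega
  have hb1 := count_supersets_le S (K ∩ S) (m/3) inter_subset_right
    (by omega) (by omega)
  have hb2 := count_supersets_le Sᶜ (K ∩ Sᶜ) (m/6) inter_subset_right
    (by omega) (by omega)
  have hrR : (0:ℝ) < (r:ℝ) := by exact_mod_cast hr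
  have ratio1 : ((m/3 : ℕ) : ℝ) / (S.card : ℝ) = 2/3 := by
    rw [h3, hS]; push_cast; field_simp
  have ratio2 : ((m/6 : ℕ) : ℝ) / (Sᶜ.card : ℝ) = 1/3 := by
    rw [h6, hSc]; push_cast; field_simp
  rw [ratio1] at hb1
  rw [ratio2] at hb2
  have hprod : ∏ i ∈ K, alf S i
      = (2/3:ℝ)^(K ∩ S).card * (1/3:ℝ)^(K ∩ Sᶜ).card := by
    unfold alf
    rw [Finset.prod_ite, Finset.prod_const, Finset.prod_const,
      show Finset.filter (fun i => i ∈ S) K = K ∩ S from Finset.filter_mem_eq_inter,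
      show Finset.filter (fun i => ¬ i ∈ S) K = K ∩ Sᶜ by ext x; simp]
  rw [clauseFilter_card S K, clauseFamily_card S, hprod]
  push_cast
  calc ((((S.powersetCard (m/3)).filter (fun X => K ∩ S ⊆ X)).card : ℝ))
        * ((((Sᶜ.powersetCard (m/6)).filter (fun X => K ∩ Sᶜ ⊆ X)).card : ℝ))
      ≤ ((2/3:ℝ)^(K ∩ S).card * ((S.powersetCard (m/3)).card : ℝ))
        * ((1/3:ℝ)^(K ∩ Sᶜ).card * ((Sᶜ.powersetCard (m/6)).card : ℝ)) := by
        exact mul_le_mul hb1 hb2 (by positivity) (by positivity)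
    _ = (2/3:ℝ)^(K ∩ S).card * (1/3:ℝ)^(K ∩ Sᶜ).card
        * (((S.powersetCard (m/3)).card : ℝ) * ((Sᶜ.powersetCard (m/6)).card : ℝ)) := by
        ring

lemma sdiff_subset_iff'' {γ : Type*} [DecidableEq γ] {s t u : Finset γ} :
    s \ t ⊆ u ↔ s ⊆ t ∪ u := by
  constructor <;> intro h x hx
  · by_cases hxt : x ∈ t
    · exact mem_union_left _ hxt
    · exact mem_union_right _ (h (mem_sdiff.2 ⟨hx, hxt⟩))
  · rcases mem_sdiff.1 hx with ⟨h1, h2⟩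
    rcases mem_union.1 (h h1) with h3 | h3
    · exact absurd h3 h2
    · exact h3

lemma union_filter_le (hm : m = 6*r) (hr : 0 < r) {S T : Finset (Fin m)}
    (hS : S.card = 3*r) (hT : T.card = 3*r) (I : Finset (Fin m)) :
    ((((clauseFamily S) ×ˢ (clauseFamily T)).filter fun p => I ⊆ p.1 ∪ p.2).card : ℝ)
      ≤ (∏ i ∈ I, (alf S i + alf T i - alf S i * alf T i))
        * (((clauseFamily S).card : ℝ) * ((clauseFamily T).card : ℝ)) := by
  classical
  set FS := clauseFamily S
  set FT := clauseFamily T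
  have step1 : (((FS ×ˢ FT).filter fun p => I ⊆ p.1 ∪ p.2).card : ℕ)
      = ∑ A ∈ FS, (FT.filter fun B => I \ A ⊆ B).card := by
    rw [Finset.card_filter, Finset.sum_product]
    refine Finset.sum_congr rfl fun A _ => ?_
    rw [Finset.card_filter]
    refine Finset.sum_congr rfl fun B _ => ?_
    simp only [sdiff_subset_iff'']
  have step2 : ∀ A ∈ FS, ((FT.filter fun B => I \ A ⊆ B).card : ℝ)
      ≤ (∏ i ∈ I, ((1 - alf T i) * (if i ∈ A then (1:ℝ) else 0) + alf T i))
        * (FT.card : ℝ) := by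
    intro A _
    refine (clauseFamily_filter_le hm hr hT (I \ A)).trans (le_of_eq ?_)
    congr 1
    rw [Finset.sdiff_eq_filter, Finset.prod_filter]
    refine Finset.prod_congr rfl fun i _ => ?_
    by_cases h : i ∈ A <;> simp [h]
  have step3 : ∑ A ∈ FS, ∏ i ∈ I, ((1 - alf T i) * (if i ∈ A then (1:ℝ) else 0) + alf T i)
      ≤ (∏ i ∈ I, ((1 - alf T i) * alf S i + alf T i)) * (FS.card : ℝ) := by
    refine expectation_step FS I (alf T) (alf S) (alf_nonneg T) (alf_le_one T)
      (alf_nonneg S) fun J => ?_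
    exact clauseFamily_filter_le hm hr hS J
  calc ((((FS ×ˢ FT)).filter fun p => I ⊆ p.1 ∪ p.2).card : ℝ)
      = ∑ A ∈ FS, ((FT.filter fun B => I \ A ⊆ B).card : ℝ) := by
        exact_mod_cast step1
    _ ≤ ∑ A ∈ FS, (∏ i ∈ I, ((1 - alf T i) * (if i ∈ A then (1:ℝ) else 0) + alf T i))
          * (FT.card : ℝ) := Finset.sum_le_sum step2
    _ = (∑ A ∈ FS, ∏ i ∈ I, ((1 - alf T i) * (if i ∈ A then (1:ℝ) else 0) + alf T i))
          * (FT.card : ℝ) := by rw [Finset.sum_mul]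
    _ ≤ ((∏ i ∈ I, ((1 - alf T i) * alf S i + alf T i)) * (FS.card : ℝ)) * (FT.card : ℝ) := by
        have : (0:ℝ) ≤ (FT.card : ℝ) := by positivity
        exact mul_le_mul_of_nonneg_right step3 this
    _ = (∏ i ∈ I, (alf S i + alf T i - alf S i * alf T i))
          * (((FS.card : ℝ)) * ((FT.card : ℝ))) := by
        rw [show (∏ i ∈ I, ((1 - alf T i) * alf S i + alf T i))
            = ∏ i ∈ I, (alf S i + alf T i - alf S i * alf T i) from
          Finset.prod_congr rfl fun i _ => by ring]
        ring

end family

/-- Generic MGF expansion step. -/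
lemma mgf_step {γ Ω' : Type*} [DecidableEq γ] (Ωs : Finset Ω') (U : Ω' → Finset γ)
    (I : Finset γ) (c : ℝ) (hc : 0 ≤ c) (q : γ → ℝ)
    (hF : ∀ J : Finset γ, ((Ωs.filter fun ω => J ⊆ U ω).card : ℝ)
      ≤ (∏ i ∈ J, q i) * Ωs.card) :
    ∑ ω ∈ Ωs, ∏ i ∈ I, (c * (if i ∈ U ω then (1:ℝ) else 0) + 1)
      ≤ (∏ i ∈ I, (c * q i + 1)) * Ωs.card := by
  have expand : ∀ ω : Ω',
      ∏ i ∈ I, (c * (if i ∈ U ω then (1:ℝ) else 0) + 1)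
        = ∑ J ∈ I.powerset, c ^ J.card * (if J ⊆ U ω then (1:ℝ) else 0) := by
    intro ω
    rw [Finset.prod_add]
    refine Finset.sum_congr rfl fun J hJ => ?_
    rw [Finset.prod_mul_distrib, Finset.prod_boole, Finset.prod_const, Finset.prod_const_one,
      mul_one]
    congr 2
  calc ∑ ω ∈ Ωs, ∏ i ∈ I, (c * (if i ∈ U ω then (1:ℝ) else 0) + 1)
      = ∑ J ∈ I.powerset, c ^ J.card * ((Ωs.filter fun ω => J ⊆ U ω).card : ℝ) := by
        simp only [expand]
        rw [Finset.sum_comm]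
        refine Finset.sum_congr rfl fun J _ => ?_
        rw [Finset.card_filter]
        push_cast
        rw [Finset.mul_sum]
    _ ≤ ∑ J ∈ I.powerset, c ^ J.card * ((∏ i ∈ J, q i) * Ωs.card) := by
        refine Finset.sum_le_sum fun J _ => ?_
        exact mul_le_mul_of_nonneg_left (hF J) (by positivity)
    _ = (∑ J ∈ I.powerset, (∏ i ∈ J, c * q i) * ∏ i ∈ I \ J, (1:ℝ)) * Ωs.card := by
        rw [Finset.sum_mul]
        refine Finset.sum_congr rfl fun J _ => ?_
        rw [Finset.prod_mul_distrib, Finset.prod_const, Finset.prod_const_one]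
        ring
    _ = (∏ i ∈ I, (c * q i + 1)) * Ωs.card := by rw [← Finset.prod_add]

lemma sum_p {m r : ℕ} (hm : m = 6*r) {S T : Finset (Fin m)}
    (hS : S.card = 3*r) (hT : T.card = 3*r) (hST : (S ∩ T).card = 2*r) :
    ∑ i : Fin m, (alf S i + alf T i - alf S i * alf T i) = 40*r/9 := by
  have point : ∀ i : Fin m, alf S i + alf T i - alf S i * alf T i
      = 5/9 + (2/9) * (if i ∈ S then (1:ℝ) else 0) + (2/9) * (if i ∈ T then (1:ℝ) else 0)
        - (1/9) * (if i ∈ S ∩ T then (1:ℝ) else 0) := by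
    intro i
    by_cases hiS : i ∈ S <;> by_cases hiT : i ∈ T <;>
      simp [alf, Finset.mem_inter, hiS, hiT] <;> norm_num
  rw [Finset.sum_congr rfl fun i _ => point i]
  have hsb : ∀ (W : Finset (Fin m)), ∑ i : Fin m, (if i ∈ W then (1:ℝ) else 0)
      = (W.card : ℝ) := by
    intro W
    rw [Finset.sum_ite_mem, Finset.univ_inter, Finset.sum_const, nsmul_eq_mul, mul_one]
  simp only [Finset.sum_add_distrib, Finset.sum_sub_distrib, ← Finset.mul_sum, hsb,
    Finset.sum_const, Finset.card_univ, Fintype.card_fin, nsmul_eq_mul]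
  rw [hS, hT, hST, hm]
  push_cast
  ring

/-- if `A` and `B` are drawn independently and uniformly from the clause
families of `S` and `T` respectively, where `|S| = |T| = m/2` and `|S ∩ T| = m/3`, then
for every `ε > 0`, `Pr[|A ∪ B| ≥ (20/27 + ε) m] ≤ exp(−2ε²m)`. -/
theorem stmt17 {m : ℕ} (hm : 0 < m) (h6 : 6 ∣ m)
    (S T : Finset (Fin m)) (hS : S.card = m / 2) (hT : T.card = m / 2)
    (hST : (S ∩ T).card = m / 3) (ε : ℝ) (hε : 0 < ε) :
    ((((clauseFamily S ×ˢ clauseFamily T).filter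
          fun p => (20 / 27 + ε) * m ≤ (((p.1 ∪ p.2).card : ℝ))).card : ℝ)
        / (((clauseFamily S).card : ℝ) * ((clauseFamily T).card : ℝ)))
      ≤ Real.exp (-2 * ε ^ 2 * m) := by
  classical
  obtain ⟨r, hmr⟩ := h6
  have hr : 0 < r := by omega
  have hS3 : S.card = 3 * r := by omega
  have hT3 : T.card = 3 * r := by omega
  have hST2 : (S ∩ T).card = 2 * r := by omega
  set t : ℝ := 4 * ε with ht_def
  have ht : 0 ≤ t := by positivity
  set c : ℝ := Real.exp t - 1 with hc_def
  have hc : 0 ≤ c := by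
    have : (1:ℝ) ≤ Real.exp t := Real.one_le_exp ht
    linarith
  set p : Fin m → ℝ := fun i => alf S i + alf T i - alf S i * alf T i with hp_def
  have hp0 : ∀ i, 0 ≤ p i := by
    intro i
    have h1 := alf_nonneg S i; have h2 := alf_nonneg T i
    have h3 := alf_le_one S i; have h4 := alf_le_one T i
    simp only [hp_def]
    nlinarith
  have hp1 : ∀ i, p i ≤ 1 := by
    intro i
    have h1 := alf_nonneg S i; have h2 := alf_nonneg T i
    have h3 := alf_le_one S i; have h4 := alf_le_one T i
    simp only [hp_def]
    nlinarith
  set FS := clauseFamily S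
  set FT := clauseFamily T
  set Ωs := FS ×ˢ FT with hΩ_def
  set E := Ωs.filter fun q => (20 / 27 + ε) * m ≤ (((q.1 ∪ q.2).card : ℝ)) with hE_def
  set N : ℝ := ((FS.card : ℝ) * (FT.card : ℝ)) with hN_def
  have hN0 : 0 ≤ N := by positivity
  -- pointwise product form of exp(t |A ∪ B|)
  have key1 : ∀ q : Finset (Fin m) × Finset (Fin m),
      ∏ i : Fin m, (c * (if i ∈ q.1 ∪ q.2 then (1:ℝ) else 0) + 1)
        = Real.exp t ^ ((q.1 ∪ q.2).card) := by
    intro q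
    have : ∀ i : Fin m, (c * (if i ∈ q.1 ∪ q.2 then (1:ℝ) else 0) + 1)
        = (if i ∈ q.1 ∪ q.2 then Real.exp t else 1) := by
      intro i
      by_cases h : i ∈ q.1 ∪ q.2 <;> simp [h, hc_def]
    rw [Finset.prod_congr rfl fun i _ => this i, Finset.prod_ite_mem,
      Finset.univ_inter, Finset.prod_const]
  -- terms are nonnegative
  have term_nonneg : ∀ q : Finset (Fin m) × Finset (Fin m),
      (0:ℝ) ≤ ∏ i : Fin m, (c * (if i ∈ q.1 ∪ q.2 then (1:ℝ) else 0) + 1) := by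
    intro q
    refine Finset.prod_nonneg fun i _ => ?_
    by_cases h : i ∈ q.1 ∪ q.2 <;> simp [h] <;> linarith
  -- Markov step
  have markov : (E.card : ℝ) * Real.exp (t * ((20 / 27 + ε) * m))
      ≤ ∑ q ∈ Ωs, ∏ i : Fin m, (c * (if i ∈ q.1 ∪ q.2 then (1:ℝ) else 0) + 1) := by
    calc (E.card : ℝ) * Real.exp (t * ((20 / 27 + ε) * m))
        = ∑ _q ∈ E, Real.exp (t * ((20 / 27 + ε) * m)) := by
          rw [Finset.sum_const, nsmul_eq_mul]
      _ ≤ ∑ q ∈ E, ∏ i : Fin m, (c * (if i ∈ q.1 ∪ q.2 then (1:ℝ) else 0) + 1) := by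
          refine Finset.sum_le_sum fun q hq => ?_
          rw [key1 q]
          simp only [hE_def, Finset.mem_filter] at hq
          have h1 : t * ((20 / 27 + ε) * m) ≤ t * ((q.1 ∪ q.2).card : ℝ) :=
            mul_le_mul_of_nonneg_left hq.2 ht
          calc Real.exp (t * ((20 / 27 + ε) * m)) ≤ Real.exp (t * ((q.1 ∪ q.2).card : ℝ)) :=
                Real.exp_le_exp.2 h1
            _ = Real.exp t ^ ((q.1 ∪ q.2).card) := by
                rw [← Real.exp_nat_mul]; ring_nf
      _ ≤ ∑ q ∈ Ωs, ∏ i : Fin m, (c * (if i ∈ q.1 ∪ q.2 then (1:ℝ) else 0) + 1) :=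
          Finset.sum_le_sum_of_subset_of_nonneg (Finset.filter_subset _ _)
            fun q _ _ => term_nonneg q
  -- MGF bound
  have mgf : ∑ q ∈ Ωs, ∏ i : Fin m, (c * (if i ∈ q.1 ∪ q.2 then (1:ℝ) else 0) + 1)
      ≤ (∏ i : Fin m, (c * p i + 1)) * N := by
    have h := mgf_step Ωs (fun q => q.1 ∪ q.2) Finset.univ c hc p
      (fun J => by
        have := union_filter_le hmr hr hS3 hT3 J
        calc ((Ωs.filter fun ω => J ⊆ ω.1 ∪ ω.2).card : ℝ)
            ≤ (∏ i ∈ J, p i) * N := this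
          _ = (∏ i ∈ J, p i) * Ωs.card := by
              rw [hΩ_def, Finset.card_product]; push_cast [hN_def]; ring)
    calc ∑ q ∈ Ωs, ∏ i : Fin m, (c * (if i ∈ q.1 ∪ q.2 then (1:ℝ) else 0) + 1)
        ≤ (∏ i : Fin m, (c * p i + 1)) * Ωs.card := h
      _ = (∏ i : Fin m, (c * p i + 1)) * N := by
          rw [hΩ_def, Finset.card_product]; push_cast [hN_def]; ring
  -- Hoeffding bound on the product
  have hoeff : (∏ i : Fin m, (c * p i + 1))
      ≤ Real.exp (t * (40*r/9) + t^2 * m / 8) := by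
    calc ∏ i : Fin m, (c * p i + 1)
        ≤ ∏ i : Fin m, Real.exp (t * p i + t^2/8) := by
          refine Finset.prod_le_prod (fun i _ => ?_) (fun i _ => ?_)
          · have := hp0 i; positivity
          · have h := hoeffding_scalar (hp0 i) (hp1 i) ht
            calc c * p i + 1 = 1 + (Real.exp t - 1) * p i := by rw [hc_def]; ring
              _ ≤ Real.exp (t * p i + t^2/8) := h
      _ = Real.exp (∑ i : Fin m, (t * p i + t^2/8)) := (Real.exp_sum _ _).symm
      _ = Real.exp (t * (40*r/9) + t^2 * m / 8) := by
          congr 1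
          rw [Finset.sum_add_distrib, ← Finset.mul_sum, sum_p hmr hS3 hT3 hST2,
            Finset.sum_const, Finset.card_univ, Fintype.card_fin, nsmul_eq_mul]
          ring
  -- combine
  have hmR : (m : ℝ) = 6 * r := by exact_mod_cast hmr
  have final : (E.card : ℝ) ≤ Real.exp (-2 * ε ^ 2 * m) * N := by
    have h1 : (E.card : ℝ) * Real.exp (t * ((20 / 27 + ε) * m))
        ≤ Real.exp (t * (40*r/9) + t^2 * m / 8) * N :=
      markov.trans (mgf.trans (mul_le_mul_of_nonneg_right hoeff hN0))
    have hepos : (0:ℝ) < Real.exp (t * ((20 / 27 + ε) * m)) := Real.exp_pos _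
    rw [← le_div_iff₀ hepos] at h1
    calc (E.card : ℝ) ≤ Real.exp (t * (40*r/9) + t^2 * m / 8) * N
            / Real.exp (t * ((20 / 27 + ε) * m)) := h1
        _ = Real.exp (t * (40*r/9) + t^2 * m / 8 - t * ((20 / 27 + ε) * m)) * N
            / 1 := by
            rw [Real.exp_sub]; field_simp
        _ = Real.exp (-2 * ε ^ 2 * m) * N := by
            rw [div_one]
            congr 2
            rw [hmR, ht_def]
            ring
  -- final division
  rcases eq_or_lt_of_le hN0 with hN | hN
  · rw [← hN, div_zero]
    positivity
  · rw [div_le_iff₀ hN]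
    exact final
end
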